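/- arXiv:2509.15149 — 4 statements merged into one kernel-verified Lean document; each statement's English description precedes it below -/
import Mathlib

section
/- If (Y,d) is a uniformly perfect metric space with constant c ∈ (0,1), then for every nonempty subset F ⊆ Y and every M > 0 with diam(F) < M < M/c < diam(Y), there exists a set L ⊆ Y with F ⊆ L and M ≤ diam(L) ≤ 2M/c. -/
open Metric Set

/-- In a `c`-uniformly perfect metric space `Y`, any nonempty set `F` with
`diam F < M < M/c < diam Y` is contained in a set `L` with `M ≤ diam L ≤ 2M/c`. -/
theorem stmt0 {Y : Type*} [MetricSpace Y] (c : ℝ) (hc : c ∈ Set.Ioo (0:ℝ) 1)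
    (hup : ∀ (y : Y) (r : ℝ), 0 < r → ENNReal.ofReal r < EMetric.diam (Set.univ : Set Y) →
      ∃ y', y' ∈ ball y r ∧ y' ∉ ball y (c * r))
    (F : Set Y) (hF : F.Nonempty) (M : ℝ) (hM : 0 < M)
    (hdF : EMetric.diam F < ENNReal.ofReal M)
    (hMY : ENNReal.ofReal (M / c) < EMetric.diam (Set.univ : Set Y)) :
    ∃ L : Set Y, F ⊆ L ∧ Bornology.IsBounded L ∧
      M ≤ Metric.diam L ∧ Metric.diam L ≤ 2 * M / c := by
  obtain ⟨hc0, hc1⟩ := hc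
  obtain ⟨y, hy⟩ := hF
  have hr : 0 < M / c := div_pos hM hc0
  obtain ⟨y', hy'1, hy'2⟩ := hup y (M / c) hr hMY
  have hcr : c * (M / c) = M := by field_simp
  rw [hcr] at hy'2
  have hdist1 : dist y' y < M / c := mem_ball.mp hy'1
  have hdist2 : M ≤ dist y' y := le_of_not_gt (fun h => hy'2 (mem_ball.mpr h))
  have hFb : Bornology.IsBounded F := by
    rw [Metric.isBounded_iff_ediam_ne_top]
    exact hdF.ne_top
  have hdF' : Metric.diam F ≤ M := by
    unfold Metric.diam
    have := ENNReal.toReal_mono (by simp) hdF.le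
    simp only [ENNReal.toReal_ofReal hM.le] at this
    exact this
  refine ⟨insert y' F, subset_insert _ _, hFb.insert y', ?_, ?_⟩
  · calc M ≤ dist y' y := hdist2
      _ ≤ Metric.diam (insert y' F) :=
        Metric.dist_le_diam_of_mem (hFb.insert y') (mem_insert _ _)
          (mem_insert_of_mem _ hy)
  · have : insert y' F = F ∪ {y'} := by
      ext x; simp [or_comm]
    rw [this]
    have hdu := Metric.diam_union hy (mem_singleton y')
    have : Metric.diam (F ∪ {y'}) ≤ M + M / c + 0 := by
      refine hdu.trans ?_
      gcongr
      · rw [dist_comm]; exact hdist1.le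
      · simp
    have hMle : M ≤ M / c := by
      rw [le_div_iff₀ hc0]
      nlinarith
    calc Metric.diam (F ∪ {y'}) ≤ M + M / c + 0 := this
      _ ≤ 2 * M / c := by
        rw [add_zero]
        have : 2 * M / c = M / c + M / c := by ring
        linarith
end

section
/- Let (X,d,μ) be a metric measure space, σ ∈ (1,∞), and B₀ = B(z₀,R₀) a ball. Suppose μ satisfies: μ(B(x,r)) ≥ b r^Q whenever B(x,r) ⊆ σB₀ and r ≤ σR₀, for some constants b,Q > 0. Let g be measurable on σB₀ with ∫_{σB₀} g^p dμ < ∞, E_k := {x ∈ σB₀ : g(x) ≤ 2^k}, and let k₀ be the least integer with 2^{k₀} ≥ [2^{1/Q}/((σ−1)(1−2^{−p/Q}))]^{Q/p} (b R₀^Q)^{−1/p} (∫_{σB₀} g^p dμ)^{1/p}. Then μ(E_{k₀}) ≥ μ(σB₀)/2. -/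
open Metric Set MeasureTheory

/-- Under the `V(σB₀,Q,b)` measure lower bound, if `k₀` is the least integer
with `2^{k₀} ≥ [2^{1/Q}/((σ−1)(1−2^{−p/Q}))]^{Q/p} (bR₀^Q)^{−1/p} (∫_{σB₀} g^p)^{1/p}`,
then `μ(E_{k₀}) ≥ μ(σB₀)/2`, where `E_k = {x ∈ σB₀ : g x ≤ 2^k}`. -/
theorem stmt6 {X : Type*} [MetricSpace X] [MeasurableSpace X] [OpensMeasurableSpace X]
    (μ : Measure X) (σ R₀ b Q p : ℝ)
    (hσ : 1 < σ) (hR₀ : 0 < R₀) (hb : 0 < b) (hQ : 0 < Q) (hp : 0 < p)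
    (z₀ : X)
    (hV : ∀ (x : X) (r : ℝ), 0 < r → r ≤ σ * R₀ → ball x r ⊆ ball z₀ (σ * R₀) →
      ENNReal.ofReal (b * r ^ Q) ≤ μ (ball x r))
    (hfin : μ (ball z₀ (σ * R₀)) < ⊤)
    (g : X → ℝ) (hg : Measurable g) (hg0 : ∀ x, 0 ≤ g x)
    (hint : IntegrableOn (fun x => g x ^ p) (ball z₀ (σ * R₀)) μ)
    (k₀ : ℤ)
    (hk₀ : ((2 : ℝ) ^ (1 / Q) / ((σ - 1) * (1 - 2 ^ (-p / Q)))) ^ (Q / p) *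
        (b * R₀ ^ Q) ^ (-(1 : ℝ) / p) *
        (∫ x in ball z₀ (σ * R₀), g x ^ p ∂μ) ^ (1 / p) ≤ (2 : ℝ) ^ (k₀ : ℝ))
    (hk₀least : ∀ k : ℤ,
      ((2 : ℝ) ^ (1 / Q) / ((σ - 1) * (1 - 2 ^ (-p / Q)))) ^ (Q / p) *
        (b * R₀ ^ Q) ^ (-(1 : ℝ) / p) *
        (∫ x in ball z₀ (σ * R₀), g x ^ p ∂μ) ^ (1 / p) ≤ (2 : ℝ) ^ (k : ℝ) → k₀ ≤ k) :
    μ (ball z₀ (σ * R₀)) / 2 ≤ μ {x ∈ ball z₀ (σ * R₀) | g x ≤ (2 : ℝ) ^ (k₀ : ℝ)} := by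
  clear hk₀least
  set B : Set X := ball z₀ (σ * R₀) with hB
  set t : ℝ := (2 : ℝ) ^ (k₀ : ℝ) with ht
  have htpos : 0 < t := Real.rpow_pos_of_pos two_pos _
  set E : Set X := {x ∈ B | g x ≤ t} with hE
  set I : ℝ := ∫ x in B, g x ^ p ∂μ with hI
  have hI0 : 0 ≤ I := by
    apply integral_nonneg
    intro x
    exact Real.rpow_nonneg (hg0 x) p
  by_contra hcon
  push_neg at hcon
  have hBpos : 0 < μ B := by
    by_contra h0
    push_neg at h0
    simp only [le_zero_iff] at h0
    rw [h0] at hcon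
    simp at hcon
  have hBEfin : μ (B \ E) ≠ ⊤ := (lt_of_le_of_lt (measure_mono diff_subset) hfin).ne
  have hgt : μ B / 2 < μ (B \ E) := by
    by_contra hle
    push_neg at hle
    have h1 : μ B ≤ μ E + μ (B \ E) := by
      refine le_trans (measure_mono ?_) (measure_union_le _ _)
      intro x hx
      by_cases hxE : x ∈ E
      · exact Or.inl hxE
      · exact Or.inr ⟨hx, hxE⟩
    have h2 : μ E + μ (B \ E) < μ B / 2 + μ B / 2 :=
      ENNReal.add_lt_add_of_lt_of_le hBEfin hcon hle
    rw [ENNReal.add_halves] at h2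
    exact absurd (h1.trans_lt h2) (lt_irrefl _)
  set m : ℝ := (μ (B \ E)).toReal with hm
  have hmpos : 0 < m := by
    apply ENNReal.toReal_pos _ hBEfin
    intro h0
    rw [h0] at hgt
    exact absurd hgt (not_lt.mpr zero_le)
  -- Chebyshev
  set ε : ℝ := t ^ p with hε
  have hεpos : 0 < ε := Real.rpow_pos_of_pos htpos p
  have hcheb : ε * m ≤ I := by
    have hsub : B \ E ⊆ {x | ε ≤ g x ^ p} ∩ B := by
      intro x hx
      have hxB : x ∈ B := hx.1
      have hxg : t < g x := by
        by_contra hle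
        exact hx.2 ⟨hxB, not_lt.mp hle⟩
      exact ⟨Real.rpow_le_rpow htpos.le hxg.le hp.le, hxB⟩
    have hmeasS : MeasurableSet {x | ε ≤ g x ^ p} :=
      measurableSet_le measurable_const ((Real.continuous_rpow_const hp.le).measurable.comp hg)
    have h1 : μ (B \ E) ≤ (μ.restrict B) {x | ε ≤ g x ^ p} := by
      rw [Measure.restrict_apply hmeasS]
      exact measure_mono hsub
    have h2 : ε * ((μ.restrict B) {x | ε ≤ g x ^ p}).toReal ≤ I :=
      mul_meas_ge_le_integral_of_nonneg
        (ae_of_all _ fun x => Real.rpow_nonneg (hg0 x) p) hint ε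
    have hfin2 : (μ.restrict B) {x | ε ≤ g x ^ p} ≠ ⊤ := by
      rw [Measure.restrict_apply hmeasS]
      exact ((measure_mono inter_subset_right).trans_lt hfin).ne
    have h3 : m ≤ ((μ.restrict B) {x | ε ≤ g x ^ p}).toReal :=
      (ENNReal.toReal_le_toReal hBEfin hfin2).mpr h1
    exact le_trans (mul_le_mul_of_nonneg_left h3 hεpos.le) h2
  -- manipulate hk₀
  set D : ℝ := (σ - 1) * (1 - 2 ^ (-p / Q)) with hD
  have h2lt : (2 : ℝ) ^ (-p / Q) < 1 :=
    Real.rpow_lt_one_of_one_lt_of_neg one_lt_two (div_neg_of_neg_of_pos (neg_neg_of_pos hp) hQ)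
  have hDpos : 0 < D := mul_pos (by linarith) (by linarith)
  have hDσ : D < σ := by
    have h0 : (0:ℝ) < (2 : ℝ) ^ (-p / Q) := Real.rpow_pos_of_pos two_pos _
    nlinarith
  have hbR : (0:ℝ) < b * R₀ ^ Q := by positivity
  have hApos : (0:ℝ) < (2 : ℝ) ^ (1 / Q) / D := by positivity
  have hkey : 2 * I ≤ ε * (D ^ Q * (b * R₀ ^ Q)) := by
    have hLnn : 0 ≤ ((2 : ℝ) ^ (1 / Q) / D) ^ (Q / p) * (b * R₀ ^ Q) ^ (-(1 : ℝ) / p) *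
        I ^ (1 / p) := by positivity
    have hpow := Real.rpow_le_rpow hLnn hk₀ hp.le
    rw [Real.mul_rpow (by positivity) (Real.rpow_nonneg hI0 _),
        Real.mul_rpow (by positivity) (by positivity),
        ← Real.rpow_mul hApos.le, ← Real.rpow_mul hbR.le, ← Real.rpow_mul hI0,
        div_mul_cancel₀ Q hp.ne', div_mul_cancel₀ (-(1:ℝ)) hp.ne',
        div_mul_cancel₀ (1:ℝ) hp.ne', Real.rpow_one,
        Real.div_rpow (by positivity) hDpos.le,
        ← Real.rpow_mul (by norm_num : (0:ℝ) ≤ 2),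
        div_mul_cancel₀ (1:ℝ) hQ.ne', Real.rpow_one, Real.rpow_neg_one] at hpow
    have := mul_le_mul_of_nonneg_right hpow (le_of_lt (mul_pos (Real.rpow_pos_of_pos hDpos Q) hbR))
    calc 2 * I = 2 / D ^ Q * (b * R₀ ^ Q)⁻¹ * I * (D ^ Q * (b * R₀ ^ Q)) := by
          field_simp
      _ ≤ ε * (D ^ Q * (b * R₀ ^ Q)) := this
  have h2m : 2 * m ≤ D ^ Q * R₀ ^ Q * b := by
    have h1 : ε * (2 * m) ≤ ε * (D ^ Q * R₀ ^ Q * b) := by nlinarith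
    exact le_of_mul_le_mul_left h1 hεpos
  set r : ℝ := (2 * m / b) ^ (1 / Q) with hr
  have hrpos : 0 < r := Real.rpow_pos_of_pos (by positivity) _
  have hrQ : r ^ Q = 2 * m / b := by
    rw [hr, ← Real.rpow_mul (by positivity), div_mul_cancel₀ (1:ℝ) hQ.ne', Real.rpow_one]
  have hrD : r ≤ D * R₀ := by
    have h1 : 2 * m / b ≤ (D * R₀) ^ Q := by
      rw [Real.mul_rpow hDpos.le hR₀.le]
      rw [div_le_iff₀ hb]
      nlinarith
    calc r = (2 * m / b) ^ (1 / Q) := hr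
      _ ≤ ((D * R₀) ^ Q) ^ (1 / Q) := Real.rpow_le_rpow (by positivity) h1 (by positivity)
      _ = D * R₀ := by
          rw [← Real.rpow_mul (by positivity), mul_one_div, div_self hQ.ne', Real.rpow_one]
  have hrle : r ≤ σ * R₀ := hrD.trans (by nlinarith)
  have hVr := hV z₀ r hrpos hrle (ball_subset_ball hrle)
  have heq : ENNReal.ofReal (b * r ^ Q) = 2 * μ (B \ E) := by
    rw [hrQ]
    rw [show b * (2 * m / b) = 2 * m by field_simp]
    rw [ENNReal.ofReal_mul (by norm_num), ENNReal.ofReal_ofNat, hm,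
      ENNReal.ofReal_toReal hBEfin]
  have hfinal : μ B < μ B := by
    calc μ B = 2 * (μ B / 2) := (ENNReal.mul_div_cancel two_ne_zero ENNReal.ofNat_ne_top).symm
      _ < 2 * μ (B \ E) := (ENNReal.mul_lt_mul_iff_right two_ne_zero ENNReal.ofNat_ne_top).mpr hgt
      _ = ENNReal.ofReal (b * r ^ Q) := heq.symm
      _ ≤ μ (ball z₀ r) := hVr
      _ ≤ μ B := measure_mono (ball_subset_ball hrle)
  exact absurd hfinal (lt_irrefl _)
end

section
/- Let (X,d,μ) be a metric measure space, (Y,d_Y) a metric space, σ ∈ (1,∞), B₀ ⊆ X a ball of radius R₀, and suppose μ satisfies μ(B(x,r)) ≥ b r^Q whenever B(x,r) ⊆ σB₀ with r ≤ σR₀, for constants Q,b > 0. Let s,p ∈ (0,∞) with p > Q/s, and let u : σB₀ → Y be measurable admitting a function g ∈ L^p(σB₀), g ≥ 0, such that d_Y(u(x),u(y)) ≤ d(x,y)^s (g(x)+g(y)) for almost every x,y ∈ σB₀. Then there exists a set N with μ(N)=0 and a constant C depending only on s,p,Q,σ such that d_Y(u(x),u(y)) ≤ C b^{−1/p} d(x,y)^{s−Q/p}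 ‖g‖_{L^p(σB₀)} for all x,y ∈ B₀ \ N. -/
set_option maxHeartbeats 2000000


open Metric Set MeasureTheory Filter

/-- Morrey embedding for fractional Hajłasz–Sobolev maps: under the
`V(σB₀,Q,b)` condition and `p > Q/s`, any measurable `u` with an `s`-gradient
`g ∈ L^p(σB₀)` satisfies, off a null set `N`,
`d_Y(u x, u y) ≤ C b^{-1/p} d(x,y)^{s-Q/p} ‖g‖_{L^p(σB₀)}` on `B₀ \ N`,
with `C` depending only on `s, p, Q, σ`. -/
theorem stmt7 (s p Q σ : ℝ) (hs : 0 < s) (hQ : 0 < Q) (hσ : 1 < σ) (hp : Q / s < p) :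
    ∃ C : ℝ, 0 < C ∧
      ∀ (X : Type) (_ : MetricSpace X) (_ : MeasurableSpace X),
        ∀ (_ : OpensMeasurableSpace X) (μ : Measure X)
          (Y : Type) (_ : MetricSpace Y) (_ : MeasurableSpace Y),
        ∀ (_ : BorelSpace Y) (z₀ : X) (R₀ b : ℝ), 0 < R₀ → 0 < b →
        (∀ (x : X) (r : ℝ), 0 < r → r ≤ σ * R₀ → ball x r ⊆ ball z₀ (σ * R₀) →
          ENNReal.ofReal (b * r ^ Q) ≤ μ (ball x r)) →
        ∀ (u : X → Y) (g : X → ℝ), Measurable u → Measurable g → (∀ x, 0 ≤ g x) →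
        IntegrableOn (fun x => g x ^ p) (ball z₀ (σ * R₀)) μ →
        (∃ N₀ : Set X, μ N₀ = 0 ∧ ∀ x, x ∉ N₀ → ∀ y, y ∉ N₀ →
          x ∈ ball z₀ (σ * R₀) → y ∈ ball z₀ (σ * R₀) →
          dist (u x) (u y) ≤ dist x y ^ s * (g x + g y)) →
        ∃ N : Set X, μ N = 0 ∧ ∀ x ∈ ball z₀ R₀ \ N, ∀ y ∈ ball z₀ R₀ \ N,
          dist (u x) (u y) ≤ C * b ^ (-(1 : ℝ) / p) * dist x y ^ (s - Q / p) *
            (∫ z in ball z₀ (σ * R₀), g z ^ p ∂μ) ^ (1 / p) := by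
  have hp0 : 0 < p := lt_of_le_of_lt (div_nonneg hQ.le hs.le) hp
  have hQp : Q / p < s := by
    rw [div_lt_iff₀ hp0]
    have h1 : Q < p * s := by
      have := (div_lt_iff₀ hs).mp hp
      linarith
    linarith
  set ε : ℝ := s - Q / p with hεdef
  have hε : 0 < ε := by simp only [hεdef]; linarith
  have hσ0 : (0:ℝ) < σ := by linarith
  set c₀ : ℝ := (σ - 1) / 2 with hc₀def
  have hc0 : (0:ℝ) < c₀ := by rw [hc₀def]; linarith
  set qm : ℝ := (2⁻¹ : ℝ) ^ (-(Q/p)) with hqmdef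
  set θ : ℝ := (2⁻¹ : ℝ) ^ ε with hθdef
  have hqm0 : 0 < qm := Real.rpow_pos_of_pos (by norm_num) _
  have hθ0 : 0 < θ := Real.rpow_pos_of_pos (by norm_num) _
  have hθ1 : θ < 1 := Real.rpow_lt_one (by norm_num) (by norm_num) hε
  have h1θ : 0 < (1 - θ)⁻¹ := inv_pos.mpr (by linarith)
  set C : ℝ := (2 * σ ^ s * c₀ ^ (-(Q/p))
      + 2 * (2:ℝ) ^ s * (1 + qm) * c₀ ^ ε * (1 - θ)⁻¹) * (2:ℝ) ^ (1/p) with hCdef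
  have hC : 0 < C := by
    apply mul_pos _ (Real.rpow_pos_of_pos (by norm_num) _)
    apply add_pos
    · exact mul_pos (mul_pos (by norm_num) (Real.rpow_pos_of_pos hσ0 s))
        (Real.rpow_pos_of_pos hc0 _)
    · exact mul_pos (mul_pos (mul_pos (mul_pos (by norm_num)
        (Real.rpow_pos_of_pos (by norm_num) s)) (by linarith))
        (Real.rpow_pos_of_pos hc0 _)) h1θ
  refine ⟨C, hC, ?_⟩
  intro X _ _ _ μ Y _ _ _ z₀ R₀ b hR₀ hb hV u g hu hg hg0 hInt hEx
  obtain ⟨N₀, hN₀, hpt⟩ := hEx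
  refine ⟨N₀, hN₀, ?_⟩
  rintro x ⟨hxB, hxN⟩ y ⟨hyB, hyN⟩
  set Itot : ℝ := ∫ z in ball z₀ (σ * R₀), g z ^ p ∂μ with hIdef
  have hItot : 0 ≤ Itot :=
    setIntegral_nonneg measurableSet_ball (fun z _ => Real.rpow_nonneg (hg0 z) p)
  have hσR : 0 < σ * R₀ := mul_pos hσ0 hR₀
  have hBsub : ball z₀ R₀ ⊆ ball z₀ (σ * R₀) := ball_subset_ball (by nlinarith)
  have hxBig : x ∈ ball z₀ (σ * R₀) := hBsub hxB
  have hyBig : y ∈ ball z₀ (σ * R₀) := hBsub hyB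
  by_cases hxy : x = y
  · subst hxy
    calc dist (u x) (u x) = 0 := dist_self _
    _ ≤ _ := by
        apply mul_nonneg (mul_nonneg (mul_nonneg hC.le (Real.rpow_nonneg hb.le _))
          (Real.rpow_nonneg dist_nonneg _)) (Real.rpow_nonneg hItot _)
  have hd : 0 < dist x y := dist_pos.mpr hxy
  set d : ℝ := dist x y with hddef
  have hd2 : d < 2 * R₀ := by
    have h1 : dist x z₀ < R₀ := mem_ball.mp hxB
    have h2 : dist y z₀ < R₀ := mem_ball.mp hyB
    calc d ≤ dist x z₀ + dist z₀ y := dist_triangle _ _ _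
    _ = dist x z₀ + dist y z₀ := by rw [dist_comm z₀ y]
    _ < 2 * R₀ := by linarith
  -- measurability of g^p
  have hgp : Measurable fun z => g z ^ p := by fun_prop
  -- Selection lemma
  have sel : ∀ (c : X) (r : ℝ), 0 < r → r ≤ σ * R₀ → ball c r ⊆ ball z₀ (σ * R₀) →
      ∃ z, z ∈ ball c r ∧ z ∉ N₀ ∧ g z ^ p ≤ 2 * Itot / (b * r ^ Q) := by
    intro c r hr hrle hsub
    set t : ℝ := 2 * Itot / (b * r ^ Q) with htdef
    have hbr : 0 < b * r ^ Q := mul_pos hb (Real.rpow_pos_of_pos hr Q)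
    have hmeas : MeasurableSet {z : X | t < g z ^ p} :=
      measurableSet_lt measurable_const hgp
    have hlow : ENNReal.ofReal (b * r ^ Q) ≤ μ (ball c r) := hV c r hr hrle hsub
    have hkey : μ (ball c r ∩ {z | t < g z ^ p}) < μ (ball c r) := by
      rcases eq_or_lt_of_le hItot with h0 | hpos
      · -- Itot = 0
        have ht0 : t = 0 := by rw [htdef, ← h0]; simp
        have hae : (fun z => g z ^ p) =ᵐ[μ.restrict (ball z₀ (σ * R₀))] 0 :=
          (setIntegral_eq_zero_iff_of_nonneg_ae
            (ae_of_all _ fun z => Real.rpow_nonneg (hg0 z) p) hInt).mp h0.symm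
        have hnull : (μ.restrict (ball z₀ (σ * R₀))) {z | t < g z ^ p} = 0 := by
          rw [ht0]
          have : {z : X | (0:ℝ) < g z ^ p} ⊆ {z : X | ¬ g z ^ p = (0:X → ℝ) z} := by
            intro z hz; simpa using ne_of_gt hz
          exact measure_mono_null this hae
        have h1 : μ (ball c r ∩ {z | t < g z ^ p}) = 0 := by
          have hsub2 : ball c r ∩ {z | t < g z ^ p}
              ⊆ {z | t < g z ^ p} ∩ ball z₀ (σ * R₀) :=
            fun z hz => ⟨hz.2, hsub hz.1⟩
          refine measure_mono_null hsub2 ?_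
          rwa [← Measure.restrict_apply hmeas]
        rw [h1]
        exact lt_of_lt_of_le (ENNReal.ofReal_pos.mpr hbr) hlow
      · -- Itot > 0
        have ht : 0 < t := div_pos (by linarith) hbr
        have hcheb : μ (ball c r ∩ {z | t < g z ^ p})
            ≤ ENNReal.ofReal (b * r ^ Q / 2) := by
          have h1 : μ (ball c r ∩ {z | t < g z ^ p})
              = (μ.restrict (ball c r)) {z | t < g z ^ p} := by
            rw [Measure.restrict_apply hmeas, inter_comm]
          rw [h1]
          have h2 : {z : X | t < g z ^ p}
              ⊆ {z : X | ENNReal.ofReal t ≤ ENNReal.ofReal (g z ^ p)} :=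
            fun z hz => ENNReal.ofReal_le_ofReal (le_of_lt hz)
          refine le_trans (measure_mono h2) ?_
          have h3 := meas_ge_le_lintegral_div
            (μ := μ.restrict (ball c r))
            (f := fun z => ENNReal.ofReal (g z ^ p))
            (hgp.ennreal_ofReal.aemeasurable)
            (ε := ENNReal.ofReal t) (ENNReal.ofReal_pos.mpr ht).ne'
            ENNReal.ofReal_ne_top
          refine le_trans h3 ?_
          have h4 : (∫⁻ z in ball c r, ENNReal.ofReal (g z ^ p) ∂μ)
              ≤ ∫⁻ z in ball z₀ (σ * R₀), ENNReal.ofReal (g z ^ p) ∂μ :=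
            lintegral_mono_set hsub
          have h5 : (∫⁻ z in ball z₀ (σ * R₀), ENNReal.ofReal (g z ^ p) ∂μ)
              = ENNReal.ofReal Itot :=
            (ofReal_integral_eq_lintegral_ofReal hInt
              (ae_of_all _ fun z => Real.rpow_nonneg (hg0 z) p)).symm
          calc (∫⁻ z in ball c r, ENNReal.ofReal (g z ^ p) ∂μ) / ENNReal.ofReal t
              ≤ ENNReal.ofReal Itot / ENNReal.ofReal t := by
                exact ENNReal.div_le_div_right (h4.trans_eq h5) _
          _ = ENNReal.ofReal (Itot / t) := (ENNReal.ofReal_div_of_pos ht).symm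
          _ = ENNReal.ofReal (b * r ^ Q / 2) := by
                congr 1
                rw [htdef]
                field_simp
        refine lt_of_le_of_lt hcheb (lt_of_lt_of_le ?_ hlow)
        exact (ENNReal.ofReal_lt_ofReal_iff hbr).mpr (by linarith)
    by_contra hcon
    push_neg at hcon
    have hsub3 : ball c r ⊆ N₀ ∪ (ball c r ∩ {z | t < g z ^ p}) := by
      intro z hz
      by_cases hzN : z ∈ N₀
      · exact Or.inl hzN
      · exact Or.inr ⟨hz, hcon z hz hzN⟩
    have h9 : μ (ball c r) ≤ μ N₀ + μ (ball c r ∩ {z | t < g z ^ p}) :=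
      (measure_mono hsub3).trans (measure_union_le N₀ _)
    rw [hN₀, zero_add] at h9
    exact absurd (lt_of_le_of_lt h9 hkey) (lt_irrefl _)
  -- radii
  set rj : ℕ → ℝ := fun j => c₀ * d * (2⁻¹ : ℝ) ^ j with hrjdef
  have hrjpos : ∀ j, 0 < rj j := fun j =>
    mul_pos (mul_pos hc0 hd) (pow_pos (by norm_num) j)
  have hcd : 0 < c₀ * d := mul_pos hc0 hd
  have hrjle : ∀ j, rj j ≤ c₀ * d := fun j => by
    simp only [hrjdef]
    calc c₀ * d * (2⁻¹:ℝ) ^ j ≤ c₀ * d * 1 :=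
      mul_le_mul_of_nonneg_left (pow_le_one₀ (by norm_num) (by norm_num)) hcd.le
    _ = c₀ * d := mul_one _
  have hcdR : c₀ * d ≤ (σ - 1) * R₀ := by rw [hc₀def]; nlinarith
  have hrjle' : ∀ j, rj j ≤ σ * R₀ := fun j =>
    (hrjle j).trans (hcdR.trans (by nlinarith))
  have hsubj : ∀ (c : X), c ∈ ball z₀ R₀ → ∀ j, ball c (rj j) ⊆ ball z₀ (σ * R₀) := by
    intro c hc j
    apply ball_subset_ball'
    have h1 : dist c z₀ < R₀ := mem_ball.mp hc
    have h2 := hrjle j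
    have h3 : (σ-1)*R₀ = σ*R₀ - R₀ := by ring
    linarith [hcdR]
  choose zx hzx1 hzx2 hzx3 using fun j => sel x (rj j) (hrjpos j) (hrjle' j) (hsubj x hxB j)
  choose zy hzy1 hzy2 hzy3 using fun j => sel y (rj j) (hrjpos j) (hrjle' j) (hsubj y hyB j)
  have hzxBig : ∀ j, zx j ∈ ball z₀ (σ * R₀) := fun j => hsubj x hxB j (hzx1 j)
  have hzyBig : ∀ j, zy j ∈ ball z₀ (σ * R₀) := fun j => hsubj y hyB j (hzy1 j)
  -- J and the pointwise bound
  set J : ℝ := (2 * Itot / b) ^ (1/p) with hJdef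
  have hJ0 : 0 ≤ J := Real.rpow_nonneg (div_nonneg (by linarith) hb.le) _
  have hGb : ∀ (z : X) (r : ℝ), 0 < r → g z ^ p ≤ 2 * Itot / (b * r ^ Q) →
      g z ≤ J * r ^ (-(Q/p)) := by
    intro z r hr hle
    have h1 : g z = (g z ^ p) ^ (1/p) := by
      rw [← Real.rpow_mul (hg0 z), mul_one_div_cancel hp0.ne', Real.rpow_one]
    rw [h1]
    have h2 : ((2 * Itot / (b * r ^ Q)) : ℝ) ^ (1/p) = J * r ^ (-(Q/p)) := by
      have h3 : 2 * Itot / (b * r ^ Q) = (2 * Itot / b) * (r ^ Q)⁻¹ := by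
        rw [← div_div, div_eq_mul_inv]
      rw [h3, Real.mul_rpow (div_nonneg (by linarith) hb.le)
        (inv_nonneg.mpr (Real.rpow_nonneg hr.le _)), hJdef]
      congr 1
      rw [← Real.rpow_neg hr.le, ← Real.rpow_mul hr.le, neg_mul, mul_one_div]
    rw [← h2]
    exact Real.rpow_le_rpow (Real.rpow_nonneg (hg0 z) p) hle (by positivity)
  have hbx : ∀ j, g (zx j) ≤ J * (rj j) ^ (-(Q/p)) :=
    fun j => hGb _ _ (hrjpos j) (hzx3 j)
  have hby : ∀ j, g (zy j) ≤ J * (rj j) ^ (-(Q/p)) :=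
    fun j => hGb _ _ (hrjpos j) (hzy3 j)
  -- rpow algebra for rj
  have haux : ∀ (e : ℝ) (j : ℕ), ((2⁻¹:ℝ) ^ j) ^ e = ((2⁻¹:ℝ) ^ e) ^ j := by
    intro e j
    rw [← Real.rpow_natCast (2⁻¹:ℝ) j, ← Real.rpow_mul (by norm_num), mul_comm,
      Real.rpow_mul (by norm_num), Real.rpow_natCast]
  have hrj_rpow : ∀ (e : ℝ) (j : ℕ), rj j ^ e = (c₀*d) ^ e * ((2⁻¹:ℝ) ^ e) ^ j := by
    intro e j
    simp only [hrjdef]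
    rw [Real.mul_rpow hcd.le (pow_nonneg (by norm_num) j), haux]
  have hcd' : (c₀*d) ^ s * (c₀*d) ^ (-(Q/p)) = (c₀*d) ^ ε := by
    rw [← Real.rpow_add hcd, hεdef]; ring_nf
  have hq : ((2⁻¹:ℝ) ^ s) * qm = θ := by
    rw [hqmdef, hθdef, ← Real.rpow_add (by norm_num : (0:ℝ) < 2⁻¹), hεdef]
    ring_nf
  -- per-step bounds
  set A : ℝ := 2 ^ s * (1 + qm) * J * (c₀*d) ^ ε with hAdef
  have hA0 : 0 ≤ A := by
    apply mul_nonneg (mul_nonneg (mul_nonneg (Real.rpow_nonneg (by norm_num) s)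
      (by linarith)) hJ0) (Real.rpow_nonneg hcd.le _)
  have hstep : ∀ (z : ℕ → X), (∀ j, z j ∈ ball x (rj j) ∨ z j ∈ ball y (rj j)) →
      True := fun _ _ => trivial
  -- bound for consecutive terms, for the x-chain and y-chain uniformly
  have hterm : ∀ (z : ℕ → X), (∀ j, z j ∉ N₀) → (∀ j, z j ∈ ball z₀ (σ * R₀)) →
      (∀ j, g (z j) ≤ J * (rj j) ^ (-(Q/p))) →
      (∀ (c : X) (j : ℕ), z j ∈ ball c (rj j) ∧ z (j+1) ∈ ball c (rj (j+1)) → True) →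
      True := fun _ _ _ _ _ => trivial
  -- distance bound between consecutive chain points around a center c
  have hconsec : ∀ (c : X) (z : ℕ → X), (∀ j, z j ∈ ball c (rj j)) →
      ∀ j, dist (z j) (z (j+1)) ≤ 2 * rj j := by
    intro c z hz j
    have h1 : dist (z j) c < rj j := mem_ball.mp (hz j)
    have h2 : dist (z (j+1)) c < rj (j+1) := mem_ball.mp (hz (j+1))
    have h3 : rj (j+1) ≤ rj j := by
      simp only [hrjdef]
      exact mul_le_mul_of_nonneg_left
        (pow_le_pow_of_le_one (by norm_num) (by norm_num) (Nat.le_succ j)) hcd.le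
    calc dist (z j) (z (j+1)) ≤ dist (z j) c + dist c (z (j+1)) := dist_triangle _ _ _
    _ = dist (z j) c + dist (z (j+1)) c := by rw [dist_comm c]
    _ ≤ 2 * rj j := by linarith
  -- key algebraic identity
  have hkeyalg : ∀ j : ℕ, (2 * rj j) ^ s *
      (J * (rj j) ^ (-(Q/p)) + J * (rj (j+1)) ^ (-(Q/p))) = A * θ ^ j := by
    intro j
    rw [Real.mul_rpow (by norm_num) (hrjpos j).le, hrj_rpow s j,
      hrj_rpow (-(Q/p)) j, hrj_rpow (-(Q/p)) (j+1), ← hqmdef]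
    have hps : (qm : ℝ) ^ (j+1) = qm ^ j * qm := pow_succ _ _
    rw [hps]
    have : (2:ℝ) ^ s * ((c₀*d) ^ s * ((2⁻¹:ℝ) ^ s) ^ j) *
        (J * ((c₀*d) ^ (-(Q/p)) * qm ^ j) + J * ((c₀*d) ^ (-(Q/p)) * (qm ^ j * qm)))
        = ((2:ℝ) ^ s * (1 + qm) * J * ((c₀*d) ^ s * (c₀*d) ^ (-(Q/p)))) *
          (((2⁻¹:ℝ) ^ s) ^ j * qm ^ j) := by ring
    rw [this, hcd', ← mul_pow, hq, hAdef]
  -- chain sum bound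
  have hgeo : ∀ n : ℕ, (∑ j ∈ Finset.range n, θ ^ j) ≤ (1 - θ)⁻¹ := by
    intro n
    refine (Summable.sum_le_tsum _ (fun i _ => pow_nonneg hθ0.le i)
      (summable_geometric_of_lt_one hθ0.le hθ1)).trans_eq
      (tsum_geometric_of_lt_one hθ0.le hθ1)
  have hchain : ∀ (c : X) (z : ℕ → X), (∀ j, z j ∈ ball c (rj j)) →
      (∀ j, z j ∉ N₀) → (∀ j, z j ∈ ball z₀ (σ * R₀)) →
      (∀ j, g (z j) ≤ J * (rj j) ^ (-(Q/p))) →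
      ∀ n, dist (u (z 0)) (u (z n)) ≤ A * (1 - θ)⁻¹ := by
    intro c z hzball hzN hzBig hzg n
    calc dist (u (z 0)) (u (z n))
        ≤ ∑ j ∈ Finset.range n, dist (u (z j)) (u (z (j+1))) :=
          dist_le_range_sum_dist (fun i => u (z i)) n
    _ ≤ ∑ j ∈ Finset.range n, A * θ ^ j := by
        refine Finset.sum_le_sum fun j _ => ?_
        have h1 := hpt (z j) (hzN j) (z (j+1)) (hzN (j+1)) (hzBig j) (hzBig (j+1))
        refine h1.trans ?_
        have h2 : dist (z j) (z (j+1)) ^ s ≤ (2 * rj j) ^ s :=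
          Real.rpow_le_rpow dist_nonneg (hconsec c z hzball j) hs.le
        have h3 : g (z j) + g (z (j+1)) ≤ J * (rj j) ^ (-(Q/p)) + J * (rj (j+1)) ^ (-(Q/p)) :=
          add_le_add (hzg j) (hzg (j+1))
        calc dist (z j) (z (j+1)) ^ s * (g (z j) + g (z (j+1)))
            ≤ (2 * rj j) ^ s * (J * (rj j) ^ (-(Q/p)) + J * (rj (j+1)) ^ (-(Q/p))) := by
              apply mul_le_mul h2 h3 (add_nonneg (hg0 _) (hg0 _))
                (Real.rpow_nonneg (by positivity) _)
        _ = A * θ ^ j := hkeyalg j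
    _ = A * ∑ j ∈ Finset.range n, θ ^ j := by rw [Finset.mul_sum]
    _ ≤ A * (1 - θ)⁻¹ := mul_le_mul_of_nonneg_left (hgeo n) hA0
  -- end terms
  set qs : ℝ := (2⁻¹:ℝ) ^ s with hqsdef
  have hqs0 : 0 ≤ qs := Real.rpow_nonneg (by norm_num) _
  have hqs1 : qs < 1 := Real.rpow_lt_one (by norm_num) (by norm_num) hs
  have hend : ∀ (w : X), w ∉ N₀ → w ∈ ball z₀ (σ * R₀) →
      ∀ (z : ℕ → X), (∀ j, z j ∈ ball w (rj j)) → (∀ j, z j ∉ N₀) →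
      (∀ j, z j ∈ ball z₀ (σ * R₀)) → (∀ j, g (z j) ≤ J * (rj j) ^ (-(Q/p))) →
      ∀ n, dist (u w) (u (z n)) ≤ (c₀*d) ^ s * g w * qs ^ n + J * (c₀*d) ^ ε * θ ^ n := by
    intro w hwN hwBig z hzball hzN hzBig hzg n
    have h1 := hpt w hwN (z n) (hzN n) hwBig (hzBig n)
    refine h1.trans ?_
    have h2 : dist w (z n) ^ s ≤ rj n ^ s := by
      apply Real.rpow_le_rpow dist_nonneg _ hs.le
      rw [dist_comm]
      exact (mem_ball.mp (hzball n)).le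
    have h3 : g w + g (z n) ≤ g w + J * (rj n) ^ (-(Q/p)) :=
      add_le_add le_rfl (hzg n)
    calc dist w (z n) ^ s * (g w + g (z n))
        ≤ rj n ^ s * (g w + J * (rj n) ^ (-(Q/p))) :=
          mul_le_mul h2 h3 (add_nonneg (hg0 _) (hg0 _)) (Real.rpow_nonneg (hrjpos n).le _)
    _ = (c₀*d) ^ s * g w * qs ^ n + J * (c₀*d) ^ ε * θ ^ n := by
        rw [hrj_rpow s n, hrj_rpow (-(Q/p)) n, ← hqmdef, ← hqsdef]
        have h4 : ((c₀*d) ^ s * qs ^ n) * (J * ((c₀*d) ^ (-(Q/p)) * qm ^ n))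
            = J * ((c₀*d) ^ s * (c₀*d) ^ (-(Q/p))) * (qs ^ n * qm ^ n) := by ring
        have h5 : qs ^ n * qm ^ n = θ ^ n := by rw [← mul_pow, hqsdef, hq]
        calc (c₀*d) ^ s * qs ^ n * (g w + J * ((c₀*d) ^ (-(Q/p)) * qm ^ n))
            = (c₀*d) ^ s * g w * qs ^ n +
              ((c₀*d) ^ s * qs ^ n) * (J * ((c₀*d) ^ (-(Q/p)) * qm ^ n)) := by ring
        _ = (c₀*d) ^ s * g w * qs ^ n + J * (c₀*d) ^ ε * θ ^ n := by
            rw [h4, hcd', h5]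
  -- middle bound
  have hrj0 : rj 0 = c₀ * d := by simp only [hrjdef]; simp
  have hMid : dist (u (zx 0)) (u (zy 0)) ≤ (σ*d) ^ s * (2 * (J * (c₀*d) ^ (-(Q/p)))) := by
    have h1 := hpt (zx 0) (hzx2 0) (zy 0) (hzy2 0) (hzxBig 0) (hzyBig 0)
    refine h1.trans ?_
    have hdzz : dist (zx 0) (zy 0) ≤ σ * d := by
      have h2 : dist (zx 0) x < rj 0 := mem_ball.mp (hzx1 0)
      have h3 : dist (zy 0) y < rj 0 := mem_ball.mp (hzy1 0)
      have h4 : dist (zx 0) (zy 0) ≤ dist (zx 0) x + dist x y + dist y (zy 0) :=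
        dist_triangle4 _ _ _ _
      rw [hrj0] at h2 h3
      have h5 : dist y (zy 0) = dist (zy 0) y := dist_comm _ _
      have h6 : σ * d = c₀ * d + d + c₀ * d := by rw [hc₀def]; ring
      linarith
    have h7 : dist (zx 0) (zy 0) ^ s ≤ (σ*d) ^ s :=
      Real.rpow_le_rpow dist_nonneg hdzz hs.le
    have h8 : g (zx 0) + g (zy 0) ≤ 2 * (J * (c₀*d) ^ (-(Q/p))) := by
      have b1 := hbx 0
      have b2 := hby 0
      rw [hrj0] at b1 b2
      linarith
    exact mul_le_mul h7 h8 (add_nonneg (hg0 _) (hg0 _)) (Real.rpow_nonneg (by positivity) _)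
  -- total bound for each n
  set M : ℝ := (σ*d) ^ s * (2 * (J * (c₀*d) ^ (-(Q/p)))) + 2 * (A * (1 - θ)⁻¹) with hMdef
  have htot : ∀ n, dist (u x) (u y) ≤ M +
      (((c₀*d) ^ s * g x * qs ^ n + J * (c₀*d) ^ ε * θ ^ n) +
       ((c₀*d) ^ s * g y * qs ^ n + J * (c₀*d) ^ ε * θ ^ n)) := by
    intro n
    have t1 : dist (u x) (u y) ≤ dist (u x) (u (zx 0)) + dist (u (zx 0)) (u (zy 0))
        + dist (u (zy 0)) (u y) := dist_triangle4 _ _ _ _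
    have t2 : dist (u x) (u (zx 0)) ≤ dist (u x) (u (zx n)) + dist (u (zx n)) (u (zx 0)) :=
      dist_triangle _ _ _
    have t3 : dist (u (zx n)) (u (zx 0)) ≤ A * (1 - θ)⁻¹ := by
      rw [dist_comm]
      exact hchain x zx hzx1 hzx2 hzxBig hbx n
    have t4 := hend x hxN hxBig zx hzx1 hzx2 hzxBig hbx n
    have t5 : dist (u (zy 0)) (u y) ≤ dist (u y) (u (zy n)) + A * (1 - θ)⁻¹ := by
      rw [dist_comm]
      calc dist (u y) (u (zy 0)) ≤ dist (u y) (u (zy n)) + dist (u (zy n)) (u (zy 0)) :=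
        dist_triangle _ _ _
      _ ≤ dist (u y) (u (zy n)) + A * (1 - θ)⁻¹ := by
          have : dist (u (zy n)) (u (zy 0)) ≤ A * (1 - θ)⁻¹ := by
            rw [dist_comm]; exact hchain y zy hzy1 hzy2 hzyBig hby n
          linarith
    have t6 := hend y hyN hyBig zy hzy1 hzy2 hzyBig hby n
    rw [hMdef]
    linarith [hMid]
  -- pass to the limit
  have hlim : Tendsto (fun n : ℕ => M +
      (((c₀*d) ^ s * g x * qs ^ n + J * (c₀*d) ^ ε * θ ^ n) +
       ((c₀*d) ^ s * g y * qs ^ n + J * (c₀*d) ^ ε * θ ^ n))) atTop (nhds M) := by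
    have hqs : Tendsto (fun n : ℕ => qs ^ n) atTop (nhds 0) :=
      tendsto_pow_atTop_nhds_zero_of_lt_one hqs0 hqs1
    have hθt : Tendsto (fun n : ℕ => θ ^ n) atTop (nhds 0) :=
      tendsto_pow_atTop_nhds_zero_of_lt_one hθ0.le hθ1
    have h : Tendsto (fun _ : ℕ => M) atTop (nhds M) := tendsto_const_nhds
    have hx1 := (hqs.const_mul ((c₀*d) ^ s * g x)).add (hθt.const_mul (J * (c₀*d) ^ ε))
    have hy1 := (hqs.const_mul ((c₀*d) ^ s * g y)).add (hθt.const_mul (J * (c₀*d) ^ ε))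
    have := h.add (hx1.add hy1)
    simpa using this
  have hfinal : dist (u x) (u y) ≤ M := ge_of_tendsto' hlim htot
  refine hfinal.trans ?_
  -- final algebra: M = C * b^(-1/p) * d^ε * Itot^(1/p)
  have hJeq : J = 2 ^ (1/p) * b ^ (-(1:ℝ)/p) * Itot ^ (1/p) := by
    rw [hJdef, div_eq_mul_inv, Real.mul_rpow (by positivity) (inv_nonneg.mpr hb.le),
      Real.mul_rpow (by norm_num) hItot, Real.inv_rpow hb.le, ← Real.rpow_neg hb.le,
      neg_div]
    ring
  have hsplit1 : (σ*d) ^ s = σ ^ s * d ^ s := Real.mul_rpow hσ0.le hd.le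
  have hsplit2 : (c₀*d) ^ (-(Q/p)) = c₀ ^ (-(Q/p)) * d ^ (-(Q/p)) :=
    Real.mul_rpow hc0.le hd.le
  have hsplit3 : (c₀*d) ^ ε = c₀ ^ ε * d ^ ε := Real.mul_rpow hc0.le hd.le
  have hdε : d ^ s * d ^ (-(Q/p)) = d ^ ε := by
    rw [← Real.rpow_add hd, hεdef]; ring_nf
  have hεQ : d ^ ε = d ^ s * d ^ (-(Q/p)) := hdε.symm
  rw [hMdef, hAdef, hJeq, hsplit1, hsplit2, hsplit3, hCdef, hεQ]
  exact le_of_eq (by ring)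
end

section
/- Let (X,d,μ) be a metric measure space, (Y,d_Y) a complete metric space, σ ∈ (1,∞), B₀ ⊆ X a ball of radius R₀, with μ satisfying the lower bound μ(B(x,r)) ≥ b r^Q whenever B(x,r) ⊆ σB₀ with r ≤ σR₀. If s,p ∈ (0,∞) with p > Q/s and u ∈ Ṁ^{s,p}(σB₀:Y), then u has a representative on B₀ that is Hölder continuous of order s − Q/p, with Hölder constant at most C b^{−1/p} ‖u‖_{Ṁ^{s,p}(σB₀:Y)} for C depending only on s,p,Q,σ. -/
open Metric Set MeasureTheory

/-- The homogeneous fractional Hajłasz–Sobolev seminorm `‖u‖_{Ṁ^{s,p}(B:Y)}`: the infimum of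
`‖g‖_{L^p(B)}` over all `s`-gradients `g` of `u` on `B`. -/
noncomputable def hajlaszSeminorm {X : Type*} [MetricSpace X] [MeasurableSpace X]
    {Y : Type*} [MetricSpace Y] (μ : Measure X) (B : Set X) (s p : ℝ) (u : X → Y) : ℝ :=
  sInf {t : ℝ | ∃ g : X → ℝ, Measurable g ∧ (∀ x, 0 ≤ g x) ∧
    IntegrableOn (fun x => g x ^ p) B μ ∧
    (∃ N : Set X, μ N = 0 ∧ ∀ x, x ∉ N → ∀ y, y ∉ N → x ∈ B → y ∈ B →
      dist (u x) (u y) ≤ dist x y ^ s * (g x + g y)) ∧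
    t = (∫ x in B, g x ^ p ∂μ) ^ (1 / p)}


set_option maxHeartbeats 1600000

open Filter Topology


lemma aux_pow_rpow {a : ℝ} (ha : 0 ≤ a) (y : ℝ) (n : ℕ) : (a ^ n) ^ y = (a ^ y) ^ n := by
  rw [← Real.rpow_natCast a n, ← Real.rpow_mul ha, mul_comm, Real.rpow_mul ha, Real.rpow_natCast]

lemma aux_geom_sum {w : ℝ} (h0 : 0 ≤ w) (h1 : w < 1) (n : ℕ) :
    ∑ i ∈ Finset.range n, w ^ i ≤ 1 / (1 - w) := by
  rw [geom_sum_eq h1.ne n]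
  have h2 : (0:ℝ) < 1 - w := by linarith
  have h3 : (w ^ n - 1) / (w - 1) = (1 - w ^ n) / (1 - w) := by
    rw [← neg_div_neg_eq]; ring_nf
  rw [h3]
  rw [div_le_div_iff₀ h2 h2]
  nlinarith [pow_nonneg h0 n]

noncomputable def chainC (s p Q σ : ℝ) : ℝ :=
  2 * (2:ℝ) ^ (1 + s + Q / p) * ((σ - 1) / 2) ^ (s - Q / p) / (1 - (1/2 : ℝ) ^ (s - Q / p))
    + 2 * σ ^ s * ((σ - 1) / 2) ^ (-(Q / p))

lemma chainC_pos (s p Q σ : ℝ) (hs : 0 < s) (hQ : 0 < Q) (hσ : 1 < σ) (hp : Q / s < p) :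
    0 < chainC s p Q σ := by
  have hp0 : 0 < p := (div_pos hQ hs).trans hp
  have hα : 0 < s - Q / p := by
    rw [sub_pos, div_lt_iff₀ hp0]
    have := (div_lt_iff₀ hs).mp hp
    nlinarith
  have hδ : 0 < (σ - 1) / 2 := by linarith
  have hw : (1/2:ℝ) ^ (s - Q/p) < 1 := Real.rpow_lt_one (by norm_num) (by norm_num) hα
  have h1 : 0 < (2:ℝ) ^ (1 + s + Q/p) := Real.rpow_pos_of_pos two_pos _
  have h2 : 0 < ((σ-1)/2) ^ (s - Q/p) := Real.rpow_pos_of_pos hδ _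
  have h3 : 0 < ((σ-1)/2) ^ (-(Q/p)) := Real.rpow_pos_of_pos hδ _
  have h4 : 0 < σ ^ s := Real.rpow_pos_of_pos (by linarith) s
  unfold chainC
  have := div_pos (by positivity : (0:ℝ) < 2 * (2:ℝ) ^ (1 + s + Q/p) * ((σ-1)/2) ^ (s - Q/p)) (by linarith : (0:ℝ) < 1 - (1/2:ℝ) ^ (s - Q/p))
  positivity


lemma good_point {X : Type} [MetricSpace X] [MeasurableSpace X] [OpensMeasurableSpace X]
    (μ : Measure X) (p Q : ℝ) (hp0 : 0 < p) (hQ : 0 < Q)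
    (z₀ : X) (R₀ b σ : ℝ) (hR₀ : 0 < R₀) (hb : 0 < b) (hσ : 1 < σ)
    (hV : ∀ (x : X) (r : ℝ), 0 < r → r ≤ σ * R₀ → ball x r ⊆ ball z₀ (σ * R₀) →
      ENNReal.ofReal (b * r ^ Q) ≤ μ (ball x r))
    (g : X → ℝ) (hgm : Measurable g) (hg0 : ∀ x, 0 ≤ g x)
    (hgi : IntegrableOn (fun x => g x ^ p) (ball z₀ (σ * R₀)) μ)
    (N : Set X) (hN : μ N = 0)
    (z : X) (hz : z ∈ ball z₀ R₀) (r : ℝ) (hr : 0 < r) (hrle : r ≤ (σ - 1) * R₀) :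
    ∃ w, dist w z < r ∧ w ∈ ball z₀ (σ * R₀) ∧ w ∉ N ∧
      g w ≤ (2 * (∫ x in ball z₀ (σ * R₀), g x ^ p ∂μ) / b) ^ (1 / p) * r ^ (-(Q / p)) := by
  set SB := ball z₀ (σ * R₀) with hSB
  set E := ∫ x in SB, g x ^ p ∂μ with hE
  have hE0 : 0 ≤ E := setIntegral_nonneg measurableSet_ball fun x _ => Real.rpow_nonneg (hg0 x) p
  set lam := (2 * E / b) ^ (1 / p) * r ^ (-(Q / p)) with hlam
  have hlam0 : 0 ≤ lam :=
    mul_nonneg (Real.rpow_nonneg (by positivity) _) (Real.rpow_nonneg hr.le _)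
  have hrQ : 0 < r ^ Q := Real.rpow_pos_of_pos hr Q
  have hgpm : Measurable fun x => g x ^ p :=
    (Real.continuous_rpow_const hp0.le).measurable.comp hgm
  -- the bad set bound
  have hbad : μ {w | w ∈ SB ∧ lam < g w} ≤ ENNReal.ofReal (b * r ^ Q / 2) := by
    rcases eq_or_lt_of_le hE0 with hE0' | hEpos
    · -- E = 0 : g = 0 a.e. on SB
      have hae : (fun x => g x ^ p) =ᵐ[μ.restrict SB] 0 :=
        (integral_eq_zero_iff_of_nonneg (fun x => Real.rpow_nonneg (hg0 x) p) hgi).mp hE0'.symm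
      have h0 := ae_iff.mp hae
      simp only [Pi.zero_apply] at h0
      have hmeas : MeasurableSet {x | ¬ g x ^ p = 0} :=
        ((hgpm (measurableSet_singleton 0)).compl : MeasurableSet ((fun x => g x ^ p) ⁻¹' {0})ᶜ)
      have hsub : {w | w ∈ SB ∧ lam < g w} ⊆ {x | ¬ g x ^ p = 0} ∩ SB := by
        rintro w ⟨hw1, hw2⟩
        exact ⟨(Real.rpow_pos_of_pos (lt_of_le_of_lt hlam0 hw2) p).ne', hw1⟩
      calc μ {w | w ∈ SB ∧ lam < g w} ≤ μ ({x | ¬ g x ^ p = 0} ∩ SB) := measure_mono hsub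
        _ = (μ.restrict SB) {x | ¬ g x ^ p = 0} := (Measure.restrict_apply hmeas).symm
        _ = 0 := h0
        _ ≤ _ := zero_le
    · -- E > 0 : Chebyshev
      set ε := (2 * E / b) * r ^ (-Q) with hε
      have hrnQ : 0 < r ^ (-Q) := Real.rpow_pos_of_pos hr _
      have hεpos : 0 < ε := by positivity
      have hcheb := mul_meas_ge_le_integral_of_nonneg (μ := μ.restrict SB)
        (Filter.Eventually.of_forall fun x => Real.rpow_nonneg (hg0 x) p) hgi ε
      have hfin : (μ.restrict SB) {x | ε ≤ g x ^ p} < ⊤ := hgi.measure_ge_lt_top hεpos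
      have htoReal : ((μ.restrict SB) {x | ε ≤ g x ^ p}).toReal ≤ b * r ^ Q / 2 := by
        have h2 : E / ε = b * r ^ Q / 2 := by
          rw [hε, Real.rpow_neg hr.le]
          field_simp
        rw [← h2, le_div_iff₀ hεpos, mul_comm]
        exact hcheb
      have hle : (μ.restrict SB) {x | ε ≤ g x ^ p} ≤ ENNReal.ofReal (b * r ^ Q / 2) :=
        (ENNReal.le_ofReal_iff_toReal_le hfin.ne (by positivity)).mpr htoReal
      have hlampow : lam ^ p = ε := by
        rw [hlam, Real.mul_rpow (Real.rpow_nonneg (by positivity) _) (Real.rpow_nonneg hr.le _),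
          ← Real.rpow_mul (by positivity : (0:ℝ) ≤ 2 * E / b),
          ← Real.rpow_mul hr.le,
          show -(Q / p) * p = -Q from by rw [neg_mul, div_mul_cancel₀ _ hp0.ne'],
          one_div_mul_cancel hp0.ne', Real.rpow_one, hε]
      have hAmeas : MeasurableSet {x | ε ≤ g x ^ p} := measurableSet_le measurable_const hgpm
      have hsub : {w | w ∈ SB ∧ lam < g w} ⊆ {x | ε ≤ g x ^ p} ∩ SB := by
        rintro w ⟨hw1, hw2⟩
        refine ⟨?_, hw1⟩
        have : lam ^ p ≤ g w ^ p := Real.rpow_le_rpow hlam0 hw2.le hp0.le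
        rwa [hlampow] at this
      calc μ {w | w ∈ SB ∧ lam < g w} ≤ μ ({x | ε ≤ g x ^ p} ∩ SB) := measure_mono hsub
        _ = (μ.restrict SB) {x | ε ≤ g x ^ p} := (Measure.restrict_apply hAmeas).symm
        _ ≤ _ := hle
  -- main argument
  by_contra hcon
  push_neg at hcon
  have hball : ball z r ⊆ SB := by
    intro w hw
    rw [mem_ball] at hw hz ⊢
    have h1 := dist_triangle w z z₀
    nlinarith
  have hrσ : r ≤ σ * R₀ := hrle.trans (by nlinarith)
  have hmeaslb := hV z r hr hrσ hball
  have hsub2 : ball z r ⊆ N ∪ {w | w ∈ SB ∧ lam < g w} := by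
    intro w hw
    by_cases hwN : w ∈ N
    · exact Or.inl hwN
    · exact Or.inr ⟨hball hw, hcon w (mem_ball.mp hw) (hball hw) hwN⟩
  have hcontr : ENNReal.ofReal (b * r ^ Q) ≤ ENNReal.ofReal (b * r ^ Q / 2) := by
    calc ENNReal.ofReal (b * r ^ Q) ≤ μ (ball z r) := hmeaslb
      _ ≤ μ N + μ {w | w ∈ SB ∧ lam < g w} := (measure_mono hsub2).trans (measure_union_le _ _)
      _ = μ {w | w ∈ SB ∧ lam < g w} := by rw [hN, zero_add]
      _ ≤ _ := hbad
  have hlt : b * r ^ Q / 2 < b * r ^ Q := by nlinarith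
  exact absurd hcontr (not_le.mpr ((ENNReal.ofReal_lt_ofReal_iff (by positivity)).mpr hlt))

lemma chain_est {X : Type} [MetricSpace X] [MeasurableSpace X] [OpensMeasurableSpace X]
    {Y : Type} [MetricSpace Y]
    (μ : Measure X) (s p Q σ : ℝ) (hs : 0 < s) (hQ : 0 < Q) (hσ : 1 < σ) (hp : Q / s < p)
    (z₀ : X) (R₀ b : ℝ) (hR₀ : 0 < R₀) (hb : 0 < b)
    (hV : ∀ (x : X) (r : ℝ), 0 < r → r ≤ σ * R₀ → ball x r ⊆ ball z₀ (σ * R₀) →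
      ENNReal.ofReal (b * r ^ Q) ≤ μ (ball x r))
    (u : X → Y) (g : X → ℝ) (hgm : Measurable g) (hg0 : ∀ x, 0 ≤ g x)
    (hgi : IntegrableOn (fun x => g x ^ p) (ball z₀ (σ * R₀)) μ)
    (N : Set X) (hN : μ N = 0)
    (hu : ∀ x, x ∉ N → ∀ y, y ∉ N → x ∈ ball z₀ (σ * R₀) → y ∈ ball z₀ (σ * R₀) →
      dist (u x) (u y) ≤ dist x y ^ s * (g x + g y))
    (x : X) (hx : x ∈ ball z₀ R₀) (hxN : x ∉ N)
    (y : X) (hy : y ∈ ball z₀ R₀) (hyN : y ∉ N) :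
    dist (u x) (u y) ≤ chainC s p Q σ *
      (2 * (∫ z in ball z₀ (σ * R₀), g z ^ p ∂μ) / b) ^ (1 / p) * dist x y ^ (s - Q / p) := by
  have hp0 : 0 < p := (div_pos hQ hs).trans hp
  have hα : 0 < s - Q / p := by
    rw [sub_pos, div_lt_iff₀ hp0]
    have := (div_lt_iff₀ hs).mp hp
    nlinarith
  set E := ∫ z in ball z₀ (σ * R₀), g z ^ p ∂μ with hE
  have hE0 : 0 ≤ E := setIntegral_nonneg measurableSet_ball fun z _ => Real.rpow_nonneg (hg0 z) p
  set c := (2 * E / b) ^ (1 / p) with hc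
  have hc0 : 0 ≤ c := Real.rpow_nonneg (by positivity) _
  rcases eq_or_ne x y with rfl | hxy
  · simp only [dist_self, Real.zero_rpow hα.ne', mul_zero]
    simp
  have hd : 0 < dist x y := dist_pos.mpr hxy
  set d := dist x y with hddef
  have hd2 : d < 2 * R₀ := by
    rw [mem_ball] at hx hy
    have h1 := dist_triangle x z₀ y
    have h2 : dist z₀ y = dist y z₀ := dist_comm _ _
    simp only [hddef]
    nlinarith
  set δ := (σ - 1) / 2 with hδdef
  have hδ : 0 < δ := by rw [hδdef]; linarith
  set r : ℕ → ℝ := fun i => δ * d * (1/2) ^ i with hrdef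
  have hri : ∀ i, 0 < r i := fun i => by rw [hrdef]; positivity
  have hrle : ∀ i, r i ≤ (σ - 1) * R₀ := by
    intro i
    have h1 : (1/2:ℝ) ^ i ≤ 1 := pow_le_one₀ (by norm_num) (by norm_num)
    have h2 : r i ≤ δ * d := by
      rw [hrdef]
      calc δ * d * (1/2)^i ≤ δ * d * 1 := by
            exact mul_le_mul_of_nonneg_left h1 (by positivity)
        _ = δ * d := mul_one _
    nlinarith [hd2, hri i]
  have hhalf : ∀ i, r (i+1) = r i * (1/2) := by
    intro i; rw [hrdef]; simp only [pow_succ]; ring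
  -- choose good points
  have hgp : ∀ (z : X), z ∈ ball z₀ R₀ → ∀ i : ℕ, ∃ w, dist w z < r i ∧
      w ∈ ball z₀ (σ * R₀) ∧ w ∉ N ∧ g w ≤ c * (r i) ^ (-(Q / p)) := fun z hz i =>
    good_point μ p Q hp0 hQ z₀ R₀ b σ hR₀ hb hσ hV g hgm hg0 hgi N hN z hz (r i) (hri i) (hrle i)
  -- abbreviations
  set w : ℝ := (1/2:ℝ) ^ (s - Q/p) with hwdef
  have hw0 : 0 ≤ w := Real.rpow_nonneg (by norm_num) _
  have hw1 : w < 1 := Real.rpow_lt_one (by norm_num) (by norm_num) hα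
  have hlam0 : ∀ i, 0 ≤ c * (r i) ^ (-(Q/p)) :=
    fun i => mul_nonneg hc0 (Real.rpow_nonneg (hri i).le _)
  have hlamsucc : ∀ i, c * (r (i+1)) ^ (-(Q/p)) = c * (r i) ^ (-(Q/p)) * (2:ℝ) ^ (Q/p) := by
    intro i
    rw [hhalf, Real.mul_rpow (hri i).le (by norm_num)]
    have h1 : ((1:ℝ)/2) ^ (-(Q/p)) = (2:ℝ) ^ (Q/p) := by
      rw [one_div, Real.inv_rpow (by norm_num : (0:ℝ) ≤ 2), ← Real.rpow_neg (by norm_num : (0:ℝ) ≤ 2), neg_neg]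
    rw [h1]; ring
  have h2Qp : (1:ℝ) ≤ (2:ℝ) ^ (Q/p) := Real.one_le_rpow (by norm_num) (div_pos hQ hp0).le
  have hlammono : ∀ i, c * (r i) ^ (-(Q/p)) ≤ c * (r (i+1)) ^ (-(Q/p)) := by
    intro i
    rw [hlamsucc i]
    exact le_mul_of_one_le_right (hlam0 i) h2Qp
  have hrs : ∀ i : ℕ, (r i) ^ s = (δ*d) ^ s * ((1/2:ℝ) ^ s) ^ i := by
    intro i
    rw [hrdef]
    rw [Real.mul_rpow (by positivity) (by positivity), aux_pow_rpow (by norm_num) s i]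
  have hrs_lam : ∀ i : ℕ, (r i) ^ s * (c * (r i) ^ (-(Q/p)))
      = c * (δ*d) ^ (s - Q/p) * w ^ i := by
    intro i
    have h1 : (r i) ^ s * (r i) ^ (-(Q/p)) = (r i) ^ (s - Q/p) := by
      rw [← Real.rpow_add (hri i)]; ring_nf
    have h2 : (r i) ^ (s - Q/p) = (δ*d) ^ (s - Q/p) * w ^ i := by
      rw [hrdef]
      rw [Real.mul_rpow (by positivity) (by positivity), aux_pow_rpow (by norm_num) _ i, hwdef]
    calc (r i) ^ s * (c * (r i) ^ (-(Q/p))) = c * ((r i) ^ s * (r i) ^ (-(Q/p))) := by ring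
      _ = c * ((δ*d) ^ (s - Q/p) * w ^ i) := by rw [h1, h2]
      _ = c * (δ*d) ^ (s - Q/p) * w ^ i := by ring
  -- per-point chain bound
  have hchainseq : ∀ (z : X) (hz : z ∈ ball z₀ R₀), z ∉ N → ∀ n : ℕ,
      dist (u z) (u ((hgp z hz 0).choose)) ≤ (r n) ^ s * (g z + c * (r n) ^ (-(Q/p)))
        + (2:ℝ) ^ (1 + s + Q/p) * (c * (δ*d) ^ (s - Q/p)) * (1 / (1 - w)) := by
    intro z hz hzN n
    set zs : ℕ → X := fun i => (hgp z hz i).choose with hzs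
    have hspec : ∀ i, dist (zs i) z < r i ∧ zs i ∈ ball z₀ (σ * R₀) ∧ zs i ∉ N ∧
        g (zs i) ≤ c * (r i) ^ (-(Q/p)) := fun i => (hgp z hz i).choose_spec
    have hzSB : z ∈ ball z₀ (σ * R₀) :=
      ball_subset_ball (by nlinarith : R₀ ≤ σ * R₀) hz
    -- step estimate
    have hT : ∀ i, dist (u (zs i)) (u (zs (i+1))) ≤
        (2:ℝ) ^ (1 + s + Q/p) * (c * (δ*d) ^ (s - Q/p)) * w ^ i := by
      intro i
      have hdix : dist (zs i) (zs (i+1)) ≤ 2 * r i := by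
        have h1 := dist_triangle_right (zs i) (zs (i+1)) z
        have h2 := (hspec i).1
        have h3 := (hspec (i+1)).1
        have h4 : r (i+1) ≤ r i := by rw [hhalf]; nlinarith [hri i]
        linarith
      have h0 := hu (zs i) (hspec i).2.2.1 (zs (i+1)) (hspec (i+1)).2.2.1
        (hspec i).2.1 (hspec (i+1)).2.1
      have hstep2 : dist (zs i) (zs (i+1)) ^ s * (g (zs i) + g (zs (i+1)))
          ≤ (2 * r i) ^ s * (c * (r i) ^ (-(Q/p)) + c * (r (i+1)) ^ (-(Q/p))) := by
        apply mul_le_mul (Real.rpow_le_rpow dist_nonneg hdix hs.le)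
          (add_le_add (hspec i).2.2.2 (hspec (i+1)).2.2.2)
          (add_nonneg (hg0 _) (hg0 _)) (Real.rpow_nonneg (by positivity) _)
      have hstep3 : (2 * r i) ^ s * (c * (r i) ^ (-(Q/p)) + c * (r (i+1)) ^ (-(Q/p)))
          ≤ (2 * r i) ^ s * (2 * (c * (r (i+1)) ^ (-(Q/p)))) := by
        apply mul_le_mul_of_nonneg_left ?_ (Real.rpow_nonneg (by positivity) _)
        linarith [hlammono i]
      have hstep_eq : (2 * r i) ^ s * (2 * (c * (r (i+1)) ^ (-(Q/p))))
          = (2:ℝ) ^ (1 + s + Q/p) * (c * (δ*d) ^ (s - Q/p)) * w ^ i := by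
        rw [Real.mul_rpow (by norm_num : (0:ℝ) ≤ 2) (hri i).le, hlamsucc i]
        have h2 : (2:ℝ) ^ (1 + s + Q/p) = 2 * (2:ℝ) ^ s * (2:ℝ) ^ (Q/p) := by
          rw [Real.rpow_add two_pos, Real.rpow_add two_pos, Real.rpow_one]
        rw [h2]
        linear_combination (2 * (2:ℝ) ^ s * (2:ℝ) ^ (Q/p)) * hrs_lam i
      calc dist (u (zs i)) (u (zs (i+1))) ≤ _ := h0
        _ ≤ _ := hstep2
        _ ≤ _ := hstep3
        _ = _ := hstep_eq
    -- sum estimate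
    have hsum : dist (u (zs 0)) (u (zs n)) ≤
        (2:ℝ) ^ (1 + s + Q/p) * (c * (δ*d) ^ (s - Q/p)) * (1 / (1 - w)) := by
      have hK0 : 0 ≤ (2:ℝ) ^ (1 + s + Q/p) * (c * (δ*d) ^ (s - Q/p)) :=
        mul_nonneg (Real.rpow_nonneg (by norm_num) _)
          (mul_nonneg hc0 (Real.rpow_nonneg (by positivity) _))
      calc dist (u (zs 0)) (u (zs n)) ≤ ∑ i ∈ Finset.range n, dist (u (zs i)) (u (zs (i+1))) :=
            dist_le_range_sum_dist (fun i => u (zs i)) n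
        _ ≤ ∑ i ∈ Finset.range n, (2:ℝ) ^ (1 + s + Q/p) * (c * (δ*d) ^ (s - Q/p)) * w ^ i :=
            Finset.sum_le_sum fun i _ => hT i
        _ = (2:ℝ) ^ (1 + s + Q/p) * (c * (δ*d) ^ (s - Q/p)) * ∑ i ∈ Finset.range n, w ^ i := by
            rw [← Finset.mul_sum]
        _ ≤ _ := mul_le_mul_of_nonneg_left (aux_geom_sum hw0 hw1 n) hK0
    -- A estimate
    have hA : dist (u z) (u (zs n)) ≤ (r n) ^ s * (g z + c * (r n) ^ (-(Q/p))) := by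
      have h0 := hu z hzN (zs n) (hspec n).2.2.1 hzSB (hspec n).2.1
      have h1 : dist z (zs n) ^ s ≤ (r n) ^ s := by
        apply Real.rpow_le_rpow dist_nonneg ?_ hs.le
        rw [dist_comm]
        exact (hspec n).1.le
      calc dist (u z) (u (zs n)) ≤ dist z (zs n) ^ s * (g z + g (zs n)) := h0
        _ ≤ (r n) ^ s * (g z + c * (r n) ^ (-(Q/p))) :=
            mul_le_mul h1 (add_le_add le_rfl (hspec n).2.2.2)
              (add_nonneg (hg0 _) (hg0 _)) (Real.rpow_nonneg (hri n).le _)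
    calc dist (u z) (u (zs 0)) ≤ dist (u z) (u (zs n)) + dist (u (zs n)) (u (zs 0)) :=
          dist_triangle _ _ _
      _ ≤ _ := by
          rw [dist_comm (u (zs n)) (u (zs 0))] at *
          linarith [hsum, hA]
  -- middle estimate
  have hmid : dist (u ((hgp x hx 0).choose)) (u ((hgp y hy 0).choose))
      ≤ σ ^ s * d ^ s * (2 * (c * (r 0) ^ (-(Q/p)))) := by
    set x0 := (hgp x hx 0).choose with hx0
    set y0 := (hgp y hy 0).choose with hy0
    have hxs := (hgp x hx 0).choose_spec
    have hys := (hgp y hy 0).choose_spec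
    have hr0 : r 0 = δ * d := by rw [hrdef]; simp
    have hd0 : dist x0 y0 ≤ σ * d := by
      have h1 := dist_triangle x0 x y0
      have h2 := dist_triangle x y y0
      have h3 : dist x0 x < r 0 := hxs.1
      have h4 : dist y0 y < r 0 := hys.1
      have h5 : dist y y0 = dist y0 y := dist_comm _ _
      rw [hr0] at h3 h4
      rw [hδdef] at h3 h4
      have h6 : dist x0 x = dist x0 x := rfl
      nlinarith [dist_nonneg (x := x0) (y := x)]
    have h0 := hu x0 hxs.2.2.1 y0 hys.2.2.1 hxs.2.1 hys.2.1
    have h1 : dist x0 y0 ^ s ≤ (σ * d) ^ s :=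
      Real.rpow_le_rpow dist_nonneg hd0 hs.le
    have h2 : (σ * d) ^ s = σ ^ s * d ^ s := Real.mul_rpow (by linarith) hd.le
    calc dist (u x0) (u y0) ≤ dist x0 y0 ^ s * (g x0 + g y0) := h0
      _ ≤ (σ * d) ^ s * (2 * (c * (r 0) ^ (-(Q/p)))) := by
          apply mul_le_mul h1 ?_ (add_nonneg (hg0 _) (hg0 _)) (Real.rpow_nonneg (by positivity) _)
          have := hxs.2.2.2
          have := hys.2.2.2
          linarith
      _ = _ := by rw [h2]
  -- assemble, for every n
  set S := (2:ℝ) ^ (1 + s + Q/p) * (c * (δ*d) ^ (s - Q/p)) * (1 / (1 - w)) with hSdef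
  set M := σ ^ s * d ^ s * (2 * (c * (r 0) ^ (-(Q/p)))) with hMdef
  have hmain : ∀ n : ℕ, dist (u x) (u y) ≤
      ((r n) ^ s * (g x + c * (r n) ^ (-(Q/p))) + S) + M
        + ((r n) ^ s * (g y + c * (r n) ^ (-(Q/p))) + S) := by
    intro n
    have t1 := dist_triangle (u x) (u ((hgp x hx 0).choose)) (u y)
    have t2 := dist_triangle (u ((hgp x hx 0).choose)) (u ((hgp y hy 0).choose)) (u y)
    have hx1 := hchainseq x hx hxN n
    have hy1 := hchainseq y hy hyN n
    have hy2 : dist (u ((hgp y hy 0).choose)) (u y) = dist (u y) (u ((hgp y hy 0).choose)) :=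
      dist_comm _ _
    linarith [hmid]
  -- limits
  have hrsid : ∀ n : ℕ, (r n) ^ s * (g x + c * (r n) ^ (-(Q/p)))
      = (δ*d) ^ s * g x * (((1/2:ℝ) ^ s) ^ n) + c * (δ*d) ^ (s - Q/p) * w ^ n := by
    intro n
    linear_combination g x * hrs n + hrs_lam n
  have hrsidy : ∀ n : ℕ, (r n) ^ s * (g y + c * (r n) ^ (-(Q/p)))
      = (δ*d) ^ s * g y * (((1/2:ℝ) ^ s) ^ n) + c * (δ*d) ^ (s - Q/p) * w ^ n := by
    intro n
    linear_combination g y * hrs n + hrs_lam n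
  have t1 : Tendsto (fun n : ℕ => ((1/2:ℝ) ^ s) ^ n) atTop (𝓝 0) :=
    tendsto_pow_atTop_nhds_zero_of_lt_one (Real.rpow_nonneg (by norm_num) _)
      (Real.rpow_lt_one (by norm_num) (by norm_num) hs)
  have t2 : Tendsto (fun n : ℕ => w ^ n) atTop (𝓝 0) :=
    tendsto_pow_atTop_nhds_zero_of_lt_one hw0 hw1
  have tA : ∀ (G : ℝ), Tendsto (fun n : ℕ =>
      (δ*d) ^ s * G * (((1/2:ℝ) ^ s) ^ n) + c * (δ*d) ^ (s - Q/p) * w ^ n) atTop (𝓝 0) := by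
    intro G
    have := (t1.const_mul ((δ*d) ^ s * G)).add (t2.const_mul (c * (δ*d) ^ (s - Q/p)))
    simpa using this
  have tmain : Tendsto (fun n : ℕ =>
      ((r n) ^ s * (g x + c * (r n) ^ (-(Q/p))) + S) + M
        + ((r n) ^ s * (g y + c * (r n) ^ (-(Q/p))) + S)) atTop (𝓝 ((0 + S) + M + (0 + S))) := by
    apply Tendsto.add
    · apply Tendsto.add_const
      apply Tendsto.add_const
      simp only [hrsid]
      exact tA (g x)
    · apply Tendsto.add_const
      simp only [hrsidy]
      exact tA (g y)
  have hfinal : dist (u x) (u y) ≤ (0 + S) + M + (0 + S) :=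
    ge_of_tendsto tmain (Filter.Eventually.of_forall hmain)
  -- final algebra
  have hr0 : r 0 = δ * d := by rw [hrdef]; simp
  have hds : d ^ s * d ^ (-(Q/p)) = d ^ (s - Q/p) := by
    rw [← Real.rpow_add hd]; ring_nf
  have halg : (0 + S) + M + (0 + S) = chainC s p Q σ * c * d ^ (s - Q/p) := by
    rw [hSdef, hMdef, hr0]
    unfold chainC
    rw [Real.mul_rpow hδ.le hd.le, Real.mul_rpow hδ.le hd.le, ← hδdef, ← hwdef]
    linear_combination (2 * σ ^ s * δ ^ (-(Q/p)) * c) * hds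
  calc dist (u x) (u y) ≤ _ := hfinal
    _ = _ := halg
    _ = chainC s p Q σ * c * d ^ (s - Q/p) := rfl


/-- Under the `V(σB₀,Q,b)` condition, with `p > Q/s` and `Y` complete, any
`u ∈ Ṁ^{s,p}(σB₀:Y)` has a representative on `B₀` that is Hölder continuous of order
`s − Q/p`, with Hölder constant at most `C b^{−1/p} ‖u‖_{Ṁ^{s,p}(σB₀:Y)}`, where `C`
depends only on `s, p, Q, σ`. -/
theorem stmt8 (s p Q σ : ℝ) (hs : 0 < s) (hQ : 0 < Q) (hσ : 1 < σ) (hp : Q / s < p) :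
    ∃ C : ℝ, 0 < C ∧
      ∀ (X : Type) (_ : MetricSpace X) (_ : MeasurableSpace X),
        ∀ (_ : OpensMeasurableSpace X) (μ : Measure X)
          (Y : Type) (_ : MetricSpace Y),
        ∀ (_ : CompleteSpace Y) (z₀ : X) (R₀ b : ℝ), 0 < R₀ → 0 < b →
        (∀ (x : X) (r : ℝ), 0 < r → r ≤ σ * R₀ → ball x r ⊆ ball z₀ (σ * R₀) →
          ENNReal.ofReal (b * r ^ Q) ≤ μ (ball x r)) →
        ∀ u : X → Y,
        (∃ g : X → ℝ, Measurable g ∧ (∀ x, 0 ≤ g x) ∧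
          IntegrableOn (fun x => g x ^ p) (ball z₀ (σ * R₀)) μ ∧
          ∃ N : Set X, μ N = 0 ∧ ∀ x, x ∉ N → ∀ y, y ∉ N →
            x ∈ ball z₀ (σ * R₀) → y ∈ ball z₀ (σ * R₀) →
            dist (u x) (u y) ≤ dist x y ^ s * (g x + g y)) →
        ∃ v : X → Y, (∀ᵐ x ∂(μ.restrict (ball z₀ R₀)), v x = u x) ∧
          ∀ x ∈ ball z₀ R₀, ∀ y ∈ ball z₀ R₀,
            dist (v x) (v y) ≤ C * b ^ (-(1 : ℝ) / p) *
              hajlaszSeminorm μ (ball z₀ (σ * R₀)) s p u * dist x y ^ (s - Q / p) := by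
  classical
  have hp0 : 0 < p := (div_pos hQ hs).trans hp
  have hα : 0 < s - Q / p := by
    rw [sub_pos, div_lt_iff₀ hp0]
    have := (div_lt_iff₀ hs).mp hp
    nlinarith
  refine ⟨(2:ℝ) ^ (1/p) * chainC s p Q σ,
    mul_pos (Real.rpow_pos_of_pos two_pos _) (chainC_pos s p Q σ hs hQ hσ hp), ?_⟩
  intro X _ _ _ μ Y _ _ z₀ R₀ b hR₀ hb hV u hexists
  obtain ⟨g, hgm, hg0, hgi, N, hN, hu⟩ := hexists
  haveI : Nonempty Y := ⟨u z₀⟩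
  -- sequence selection
  have hseq : ∀ (M : Set X), μ M = 0 → ∃ W : X → ℕ → X, ∀ x, x ∈ ball z₀ R₀ → ∀ n : ℕ,
      dist (W x n) x < 1/((n:ℝ)+1) ∧ W x n ∈ ball z₀ R₀ ∧ W x n ∉ M := by
    intro M hM
    have hex : ∀ (x : X) (n : ℕ), ∃ w : X, x ∈ ball z₀ R₀ →
        dist w x < 1/((n:ℝ)+1) ∧ w ∈ ball z₀ R₀ ∧ w ∉ M := by
      intro x n
      by_cases hx : x ∈ ball z₀ R₀
      · have hρ1 : (0:ℝ) < 1/((n:ℝ)+1) := by positivity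
        have hρ2 : (0:ℝ) < R₀ - dist x z₀ := by
          rw [mem_ball] at hx; linarith
        have hρ3 : (0:ℝ) < (σ - 1) * R₀ := by nlinarith
        set ρ := min (min (1/((n:ℝ)+1)) (R₀ - dist x z₀)) ((σ-1)*R₀) with hρdef
        have hρpos : 0 < ρ := lt_min (lt_min hρ1 hρ2) hρ3
        have hρle : ρ ≤ (σ-1)*R₀ := min_le_right _ _
        obtain ⟨w, hw1, _, hw3, _⟩ := good_point μ p Q hp0 hQ z₀ R₀ b σ hR₀ hb hσ hV
          g hgm hg0 hgi M hM x hx ρ hρpos hρle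
        refine ⟨w, fun _ => ⟨?_, ?_, hw3⟩⟩
        · exact hw1.trans_le ((min_le_left _ _).trans (min_le_left _ _))
        · rw [mem_ball]
          have h1 := dist_triangle w x z₀
          have h2 : ρ ≤ R₀ - dist x z₀ := (min_le_left _ _).trans (min_le_right _ _)
          linarith [hw1]
      · exact ⟨x, fun h => absurd h hx⟩
    choose W hW using hex
    exact ⟨W, fun x hx n => hW x n hx⟩
  obtain ⟨W, hW⟩ := hseq N hN
  set SB := ball z₀ (σ * R₀) with hSBdef
  set KC := chainC s p Q σ * (2 * (∫ z in SB, g z ^ p ∂μ) / b) ^ (1/p) with hKCdef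
  have hE0 : 0 ≤ ∫ z in SB, g z ^ p ∂μ :=
    setIntegral_nonneg measurableSet_ball fun z _ => Real.rpow_nonneg (hg0 z) p
  have hKC0 : 0 ≤ KC := mul_nonneg (chainC_pos s p Q σ hs hQ hσ hp).le
    (Real.rpow_nonneg (by positivity) _)
  have hchain : ∀ a, a ∈ ball z₀ R₀ → a ∉ N → ∀ a', a' ∈ ball z₀ R₀ → a' ∉ N →
      dist (u a) (u a') ≤ KC * dist a a' ^ (s - Q/p) := by
    intro a ha haN a' ha' ha'N
    exact chain_est μ s p Q σ hs hQ hσ hp z₀ R₀ b hR₀ hb hV u g hgm hg0 hgi N hN hu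
      a ha haN a' ha' ha'N
  -- generic tendsto for approximating sequences
  have htendW : ∀ (W' : X → ℕ → X), (∀ x, x ∈ ball z₀ R₀ → ∀ n : ℕ,
      dist (W' x n) x < 1/((n:ℝ)+1)) → ∀ x, x ∈ ball z₀ R₀ →
      Tendsto (fun n => W' x n) atTop (𝓝 x) := by
    intro W' hW' x hx
    apply tendsto_iff_dist_tendsto_zero.mpr
    apply squeeze_zero (fun n => dist_nonneg) (fun n => (hW' x hx n).le)
    exact tendsto_one_div_add_atTop_nhds_zero_nat
  -- Cauchy
  have hcauchy : ∀ x, x ∈ ball z₀ R₀ → CauchySeq (fun n => u (W x n)) := by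
    intro x hx
    apply cauchySeq_of_le_tendsto_0 (b := fun N₀ : ℕ => KC * (2/((N₀:ℝ)+1)) ^ (s - Q/p))
    · intro n m N₀ hn hm
      have hb1 : ∀ k : ℕ, N₀ ≤ k → 1/((k:ℝ)+1) ≤ 1/((N₀:ℝ)+1) := by
        intro k hk
        apply one_div_le_one_div_of_le (by positivity)
        have : (N₀:ℝ) ≤ (k:ℝ) := Nat.cast_le.mpr hk
        linarith
      have h1 : dist (W x n) (W x m) ≤ 2/((N₀:ℝ)+1) := by
        have := dist_triangle_right (W x n) (W x m) x
        have h2 := (hW x hx n).1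
        have h3 := (hW x hx m).1
        have h4 := hb1 n hn
        have h5 := hb1 m hm
        have : 2/((N₀:ℝ)+1) = 1/((N₀:ℝ)+1) + 1/((N₀:ℝ)+1) := by ring
        linarith
      calc dist (u (W x n)) (u (W x m))
          ≤ KC * dist (W x n) (W x m) ^ (s - Q/p) :=
            hchain _ (hW x hx n).2.1 (hW x hx n).2.2 _ (hW x hx m).2.1 (hW x hx m).2.2
        _ ≤ KC * (2/((N₀:ℝ)+1)) ^ (s - Q/p) :=
            mul_le_mul_of_nonneg_left (Real.rpow_le_rpow dist_nonneg h1 hα.le) hKC0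
    · have t0 : Tendsto (fun N₀ : ℕ => 2/((N₀:ℝ)+1)) atTop (𝓝 0) := by
        have := tendsto_one_div_add_atTop_nhds_zero_nat.const_mul (2:ℝ)
        simp only [mul_zero] at this
        convert this using 2 with n
        ring
      have t1 : Tendsto (fun N₀ : ℕ => (2/((N₀:ℝ)+1)) ^ (s - Q/p)) atTop (𝓝 0) := by
        have := t0.rpow_const (Or.inr hα.le)
        rwa [Real.zero_rpow hα.ne'] at this
      have := t1.const_mul KC
      simpa using this
  -- the representative
  set v : X → Y := fun x => if h : x ∈ ball z₀ R₀ then limUnder atTop (fun n => u (W x n)) else u x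
    with hvdef
  have hvlim : ∀ x, x ∈ ball z₀ R₀ → Tendsto (fun n => u (W x n)) atTop (𝓝 (v x)) := by
    intro x hx
    have h := (hcauchy x hx).tendsto_limUnder
    have hvx : v x = limUnder atTop (fun n => u (W x n)) := by rw [hvdef]; exact dif_pos hx
    rw [hvx]
    exact h
  have hvu : ∀ x, x ∈ ball z₀ R₀ → x ∉ N → v x = u x := by
    intro x hx hxN
    have h2 : Tendsto (fun n => u (W x n)) atTop (𝓝 (u x)) := by
      apply tendsto_iff_dist_tendsto_zero.mpr
      apply squeeze_zero (fun n => dist_nonneg)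
        (fun n => hchain _ (hW x hx n).2.1 (hW x hx n).2.2 x hx hxN)
      have t0 : Tendsto (fun n => dist (W x n) x) atTop (𝓝 0) :=
        squeeze_zero (fun n => dist_nonneg) (fun n => (hW x hx n).1.le)
          tendsto_one_div_add_atTop_nhds_zero_nat
      have t1 := t0.rpow_const (Or.inr hα.le)
      rw [Real.zero_rpow hα.ne'] at t1
      have := t1.const_mul KC
      simpa using this
    exact tendsto_nhds_unique (hvlim x hx) h2
  -- Hölder for v w.r.t. g
  have hvH : ∀ x, x ∈ ball z₀ R₀ → ∀ y, y ∈ ball z₀ R₀ →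
      dist (v x) (v y) ≤ KC * dist x y ^ (s - Q/p) := by
    intro x hx y hy
    have h1 : Tendsto (fun n => dist (u (W x n)) (u (W y n))) atTop (𝓝 (dist (v x) (v y))) :=
      (hvlim x hx).dist (hvlim y hy)
    have h2 : Tendsto (fun n => KC * dist (W x n) (W y n) ^ (s - Q/p)) atTop
        (𝓝 (KC * dist x y ^ (s - Q/p))) := by
      have := ((htendW W (fun a ha n => (hW a ha n).1) x hx).dist
        (htendW W (fun a ha n => (hW a ha n).1) y hy)).rpow_const (Or.inr hα.le)
      exact this.const_mul KC
    exact le_of_tendsto_of_tendsto' h1 h2 (fun n =>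
      hchain _ (hW x hx n).2.1 (hW x hx n).2.2 _ (hW y hy n).2.1 (hW y hy n).2.2)
  -- v-continuity along B₀-sequences
  have hvseq : ∀ x, x ∈ ball z₀ R₀ → ∀ (z : ℕ → X), (∀ n, z n ∈ ball z₀ R₀) →
      Tendsto z atTop (𝓝 x) → Tendsto (fun n => v (z n)) atTop (𝓝 (v x)) := by
    intro x hx z hz hzt
    apply tendsto_iff_dist_tendsto_zero.mpr
    apply squeeze_zero (fun n => dist_nonneg) (fun n => hvH _ (hz n) _ hx)
    have t0 : Tendsto (fun n => dist (z n) x) atTop (𝓝 0) :=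
      tendsto_iff_dist_tendsto_zero.mp hzt
    have t1 := t0.rpow_const (Or.inr hα.le)
    rw [Real.zero_rpow hα.ne'] at t1
    have := t1.const_mul KC
    simpa using this
  -- the key estimate for an arbitrary admissible gradient
  have key : ∀ (g' : X → ℝ), Measurable g' → (∀ x, 0 ≤ g' x) →
      IntegrableOn (fun x => g' x ^ p) SB μ → ∀ (N' : Set X), μ N' = 0 →
      (∀ a, a ∉ N' → ∀ a', a' ∉ N' → a ∈ SB → a' ∈ SB →
        dist (u a) (u a') ≤ dist a a' ^ s * (g' a + g' a')) →
      ∀ x, x ∈ ball z₀ R₀ → ∀ y, y ∈ ball z₀ R₀ →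
      dist (v x) (v y) ≤ chainC s p Q σ * (2 * (∫ z in SB, g' z ^ p ∂μ) / b) ^ (1/p)
        * dist x y ^ (s - Q/p) := by
    intro g' hg'm hg'0 hg'i N' hN' hu' x hx y hy
    obtain ⟨W', hW'⟩ := hseq (N ∪ N') (measure_union_null hN hN')
    have hmemN : ∀ a ha n, W' a n ∉ N := fun a ha n h => (hW' a ha n).2.2 (Or.inl h)
    have hmemN' : ∀ a ha n, W' a n ∉ N' := fun a ha n h => (hW' a ha n).2.2 (Or.inr h)
    have h1 : Tendsto (fun n => dist (v (W' x n)) (v (W' y n))) atTop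
        (𝓝 (dist (v x) (v y))) := by
      exact (hvseq x hx _ (fun n => (hW' x hx n).2.1)
          (htendW W' (fun a ha n => (hW' a ha n).1) x hx)).dist
        (hvseq y hy _ (fun n => (hW' y hy n).2.1)
          (htendW W' (fun a ha n => (hW' a ha n).1) y hy))
    have h2 : Tendsto (fun n => chainC s p Q σ * (2 * (∫ z in SB, g' z ^ p ∂μ) / b) ^ (1/p)
        * dist (W' x n) (W' y n) ^ (s - Q/p)) atTop
        (𝓝 (chainC s p Q σ * (2 * (∫ z in SB, g' z ^ p ∂μ) / b) ^ (1/p)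
          * dist x y ^ (s - Q/p))) := by
      have := ((htendW W' (fun a ha n => (hW' a ha n).1) x hx).dist
        (htendW W' (fun a ha n => (hW' a ha n).1) y hy)).rpow_const (Or.inr hα.le)
      exact this.const_mul _
    refine le_of_tendsto_of_tendsto' h1 h2 (fun n => ?_)
    rw [hvu _ (hW' x hx n).2.1 (hmemN x hx n), hvu _ (hW' y hy n).2.1 (hmemN y hy n)]
    exact chain_est μ s p Q σ hs hQ hσ hp z₀ R₀ b hR₀ hb hV u g' hg'm hg'0 hg'i N' hN' hu'
      _ (hW' x hx n).2.1 (hmemN' x hx n) _ (hW' y hy n).2.1 (hmemN' y hy n)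
  -- conclude
  refine ⟨v, ?_, ?_⟩
  · filter_upwards [ae_restrict_mem measurableSet_ball,
      ae_restrict_of_ae (measure_eq_zero_iff_ae_notMem.mp hN)] with x hx hxN
    exact hvu x hx hxN
  · intro x hx y hy
    rcases eq_or_ne x y with rfl | hne
    · simp [Real.zero_rpow hα.ne']
    have hd : 0 < dist x y := dist_pos.mpr hne
    set KP := (2:ℝ) ^ (1/p) * chainC s p Q σ * b ^ (-(1:ℝ)/p) * dist x y ^ (s - Q/p) with hKPdef
    have hKP : 0 < KP := by
      have h1 : (0:ℝ) < b ^ (-(1:ℝ)/p) := Real.rpow_pos_of_pos hb _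
      have h2 : (0:ℝ) < dist x y ^ (s - Q/p) := Real.rpow_pos_of_pos hd _
      have h3 := chainC_pos s p Q σ hs hQ hσ hp
      have h4 : (0:ℝ) < (2:ℝ) ^ (1/p) := Real.rpow_pos_of_pos two_pos _
      positivity
    have hlow : dist (v x) (v y) / KP ≤ hajlaszSeminorm μ SB s p u := by
      unfold hajlaszSeminorm
      apply le_csInf
      · exact ⟨(∫ z in SB, g z ^ p ∂μ) ^ (1/p), g, hgm, hg0, hgi, ⟨N, hN, hu⟩, rfl⟩
      · rintro t ⟨g', h1, h2, h3, ⟨N', hN', hu'⟩, ht'⟩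
        rw [div_le_iff₀ hKP]
        have hk := key g' h1 h2 h3 N' hN' hu' x hx y hy
        have hE'0 : 0 ≤ ∫ z in SB, g' z ^ p ∂μ :=
          setIntegral_nonneg measurableSet_ball fun z _ => Real.rpow_nonneg (h2 z) p
        have hsplit : (2 * (∫ z in SB, g' z ^ p ∂μ) / b) ^ (1/p)
            = (2:ℝ) ^ (1/p) * (∫ z in SB, g' z ^ p ∂μ) ^ (1/p) * b ^ (-(1:ℝ)/p) := by
          rw [Real.div_rpow (by positivity) hb.le, Real.mul_rpow (by norm_num) hE'0,
            show -(1:ℝ)/p = -(1/p) by ring, Real.rpow_neg hb.le, div_eq_mul_inv]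
        calc dist (v x) (v y) ≤ _ := hk
          _ = t * KP := by rw [hsplit, hKPdef, ht']; ring
    have := (div_le_iff₀ hKP).mp hlow
    calc dist (v x) (v y) ≤ hajlaszSeminorm μ SB s p u * KP := this
      _ = (2:ℝ) ^ (1/p) * chainC s p Q σ * b ^ (-(1:ℝ)/p) *
          hajlaszSeminorm μ SB s p u * dist x y ^ (s - Q/p) := by rw [hKPdef]; ring
end
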